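/- Let Σ be a finite alphabet and w, w̃ ∈ Σ* with ι(w) = ι(w̃) = 1 such that alph(α₀) = alph(α₁) = alph(α̃₀) = alph(α̃₁) is a subset of Σ of cardinality |Σ| − 1. Then w ∼_k w̃ if and only if α₀ ∼_{k−1} α̃₀ and α₁ ∼_{k−1} α̃₁. -/

import Mathlib

open List

variable {α : Type*} [DecidableEq α] [Fintype α]

/-- Simon `k`-congruence: `u` and `v` have the same scattered factors
(subsequences) of length at most `k`. -/
def SimonCongr (k : ℕ) (u v : List α) : Prop :=
  ∀ s : List α, s.length ≤ k → (s.Sublist u ↔ s.Sublist v)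

/-- `w` is `k`-universal with respect to the alphabet `S`: every word of length `k`
over `S` is a scattered factor of `w`. -/
def UniversalOn (S : Finset α) (k : ℕ) (w : List α) : Prop :=
  ∀ s : List α, s.length = k → (∀ x ∈ s, x ∈ S) → s.Sublist w

/-- The universality index of `w` w.r.t. the alphabet `S`. -/
noncomputable def iotaOn (S : Finset α) (w : List α) : ℕ :=
  sSup {k | UniversalOn S k w}

/-- The universality index of `w` w.r.t. the full alphabet. -/
noncomputable def iotaUniv (w : List α) : ℕ := iotaOn Finset.univ w

/-- `a` is an arch w.r.t. `S`: it contains every letter of `S`, and its last letter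
belongs to `S` and occurs exactly once in `a`. -/
def IsArchOn (S : Finset α) (a : List α) : Prop :=
  (∀ x ∈ S, x ∈ a) ∧ ∃ a' x, a = a' ++ [x] ∧ x ∈ S ∧ x ∉ a'

/-- `(ars, r)` is the arch factorization of `w` w.r.t. `S`. -/
def IsArchFactOn (S : Finset α) (w : List α) (ars : List (List α)) (r : List α) : Prop :=
  w = ars.flatten ++ r ∧ (∀ a ∈ ars, IsArchOn S a) ∧ ¬ (∀ x ∈ S, x ∈ r)

/-- `(A, B)` is the α-β-factorization of `w` with `m` arches:
`αᵢ₋₁βᵢ` (for `i ∈ [m]`) together with rest `α_m` is the arch factorization of `w`, and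
`(β_{m-i}α_{m-i})^R` together with rest `α₀^R` is the arch factorization of `w^R`. -/
def IsAlphaBetaFact (w : List α) (m : ℕ) (A B : ℕ → List α) : Prop :=
  IsArchFactOn Finset.univ w (List.ofFn fun i : Fin m => A i.val ++ B (i.val + 1)) (A m) ∧
  IsArchFactOn Finset.univ w.reverse
    (List.ofFn fun i : Fin m => (B (m - i.val) ++ A (m - i.val)).reverse) ((A 0).reverse)

/-- The concatenation `αᵢ βᵢ₊₁ αᵢ₊₁ ⋯ βⱼ αⱼ`. -/
def abSeg (A B : ℕ → List α) (i j : ℕ) : List α :=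
  A i ++ (((List.Ico (i + 1) (j + 1)).map fun l => B l ++ A l).flatten)

/-- The core of a `β`-factor: the factor with its first and last letter removed. -/
def coreOf (b : List α) : List α := (b.drop 1).dropLast

private lemma simonCongr_symm' {k : ℕ} {u v : List α} (h : SimonCongr k u v) :
    SimonCongr k v u := fun s hs => (h s hs).symm

private lemma extract_left' {x : α} {s u v : List α} (hxs : x ∉ s) (hxu : x ∉ u) (hxv : x ∉ v)
    (h : s ++ [x] <+ u ++ ([x] ++ v)) : s <+ u := by
  obtain ⟨l1, l2, heq, h1, h2⟩ := List.sublist_append_iff.mp h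
  have hxl1 : x ∉ l1 := fun hx => hxu (h1.subset hx)
  have hxl2 : x ∈ l2 := by
    have hx : x ∈ l1 ++ l2 := heq ▸ (by simp)
    simp only [List.mem_append] at hx
    tauto
  rcases List.sublist_cons_iff.mp h2 with h2' | ⟨r, hr, hrs⟩
  · exact absurd (h2'.subset hxl2) hxv
  · subst hr
    rcases r.eq_nil_or_concat with rfl | ⟨r', a, rfl⟩
    · obtain ⟨hl, -⟩ := List.append_inj' heq rfl
      exact hl ▸ h1
    · simp only [List.concat_eq_append, List.nil_append] at *
      rw [show l1 ++ x :: (r' ++ [a]) = (l1 ++ x :: r') ++ [a] by simp] at heq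
      obtain ⟨hl, ha⟩ := List.append_inj' heq rfl
      simp only [List.cons.injEq] at ha
      exact absurd (hl ▸ (by simp : x ∈ l1 ++ x :: r')) (by simpa [ha.1] using hxs)

private lemma extract_right' {x : α} {s u v : List α} (hxs : x ∉ s) (hxu : x ∉ u) (hxv : x ∉ v)
    (h : x :: s <+ u ++ ([x] ++ v)) : s <+ v := by
  obtain ⟨l1, l2, heq, h1, h2⟩ := List.sublist_append_iff.mp h
  cases l1 with
  | cons a l1' =>
    simp only [List.cons_append, List.cons.injEq] at heq
    exact absurd (h1.subset (heq.1 ▸ (List.mem_cons_self : a ∈ a :: l1'))) hxu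
  | nil =>
    simp only [List.nil_append] at heq
    rcases List.sublist_cons_iff.mp h2 with h2' | ⟨r, hr, hrs⟩
    · exact absurd (h2'.subset (heq ▸ (List.mem_cons_self : x ∈ x :: s))) hxv
    · have hr' := heq.trans hr
      simp only [List.cons.injEq] at hr'
      simpa using hr'.2 ▸ hrs

private lemma fwd' {k : ℕ} (hk : 1 ≤ k) {x : α} {u v u' v' : List α}
    (hxu : x ∉ u) (hxv : x ∉ v)
    (hu' : ∀ y, y ≠ x → y ∈ u') (hv' : ∀ y, y ≠ x → y ∈ v')
    (Hu : SimonCongr (k - 1) u u') (Hv : SimonCongr (k - 1) v v')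
    {s : List α} (hs : s.length ≤ k) (h : s <+ u ++ ([x] ++ v)) :
    s <+ u' ++ ([x] ++ v') := by
  obtain ⟨s1, s2, heq, h1, h2⟩ := List.sublist_append_iff.mp h
  subst heq
  rcases List.sublist_cons_iff.mp h2 with h2' | ⟨r, hr, hrs⟩
  · -- s2 <+ v ; no x used
    simp only [List.length_append] at hs
    rcases eq_or_ne s2 [] with rfl | hs2
    · simp only [List.append_nil] at *
      by_cases hlen : s1.length ≤ k - 1
      · exact ((Hu s1 hlen).mp h1).trans (List.sublist_append_left _ _)
      · have hne : s1 ≠ [] := by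
          rintro rfl; simp at hlen
        have hd : s1.dropLast <+ u' := (Hu _ (by
          have := s1.length_dropLast; omega)).mp ((List.dropLast_sublist s1).trans h1)
        have hlast : s1.getLast hne ∈ v' := hv' _ (fun he =>
          hxu (he ▸ h1.subset (List.getLast_mem hne)))
        calc s1 = s1.dropLast ++ [s1.getLast hne] := (List.dropLast_append_getLast hne).symm
          _ <+ u' ++ ([x] ++ v') := hd.append
            (((List.singleton_sublist.mpr hlast).trans (List.sublist_append_right [x] v')))
    · rcases eq_or_ne s1 [] with rfl | hs1
      · simp only [List.nil_append] at *
        by_cases hlen : s2.length ≤ k - 1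
        · exact ((Hv s2 hlen).mp h2').trans
            ((List.sublist_append_right [x] v').trans (List.sublist_append_right u' _))
        · have hne : s2 ≠ [] := hs2
          have htl : s2.tail <+ v' := (Hv _ (by
            have := s2.length_tail; omega)).mp ((List.tail_sublist s2).trans h2')
          have hhd : s2.head hne ∈ u' := hu' _ (fun he =>
            hxv (he ▸ h2'.subset (List.head_mem hne)))
          calc s2 = [s2.head hne] ++ s2.tail := by simp [List.cons_head_tail]
            _ <+ u' ++ ([x] ++ v') := (List.singleton_sublist.mpr hhd).append
              (htl.trans (List.sublist_append_right [x] v'))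
      · have hl1 : s1.length ≤ k - 1 := by
          have : 1 ≤ s2.length := List.length_pos_iff.mpr hs2; omega
        have hl2 : s2.length ≤ k - 1 := by
          have : 1 ≤ s1.length := List.length_pos_iff.mpr hs1; omega
        exact ((Hu s1 hl1).mp h1).append
          (((Hv s2 hl2).mp h2').trans (List.sublist_append_right [x] v'))
  · subst hr
    simp only [List.length_append, List.length_cons] at hs
    have hl1 : s1.length ≤ k - 1 := by omega
    have hlr : r.length ≤ k - 1 := by omega
    have hrs' : r <+ v := by simpa using hrs
    exact ((Hu s1 hl1).mp h1).append
      (List.cons_sublist_cons.mpr ((Hv r hlr).mp hrs') : x :: r <+ [x] ++ v')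

private lemma key' {k : ℕ} (hk : 1 ≤ k) {x : α} {u v u' v' : List α}
    (hxu : x ∉ u) (hxv : x ∉ v) (hxu' : x ∉ u') (hxv' : x ∉ v')
    (hu : ∀ y, y ≠ x → y ∈ u) (hv : ∀ y, y ≠ x → y ∈ v)
    (hu' : ∀ y, y ≠ x → y ∈ u') (hv' : ∀ y, y ≠ x → y ∈ v') :
    SimonCongr k (u ++ ([x] ++ v)) (u' ++ ([x] ++ v')) ↔
      (SimonCongr (k - 1) u u' ∧ SimonCongr (k - 1) v v') := by
  constructor
  · intro H
    constructor
    · intro s hs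
      have hlen : (s ++ [x]).length ≤ k := by simp only [List.length_append, List.length_cons, List.length_nil]; omega
      constructor
      · intro hsub
        have hxs : x ∉ s := fun hxm => hxu (hsub.subset hxm)
        refine extract_left' hxs hxu' hxv' ((H _ hlen).mp ?_)
        exact hsub.append (List.sublist_append_left [x] v)
      · intro hsub
        have hxs : x ∉ s := fun hxm => hxu' (hsub.subset hxm)
        refine extract_left' hxs hxu hxv ((H _ hlen).mpr ?_)
        exact hsub.append (List.sublist_append_left [x] v')
    · intro s hs
      have hlen : (x :: s).length ≤ k := by simp only [List.length_cons]; omega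
      constructor
      · intro hsub
        have hxs : x ∉ s := fun hxm => hxv (hsub.subset hxm)
        refine extract_right' hxs hxu' hxv' ((H _ hlen).mp ?_)
        exact (List.cons_sublist_cons.mpr hsub : x :: s <+ [x] ++ v).trans
          (List.sublist_append_right u _)
      · intro hsub
        have hxs : x ∉ s := fun hxm => hxv' (hsub.subset hxm)
        refine extract_right' hxs hxu hxv ((H _ hlen).mpr ?_)
        exact (List.cons_sublist_cons.mpr hsub : x :: s <+ [x] ++ v').trans
          (List.sublist_append_right u' _)
  · rintro ⟨Hu, Hv⟩ s hs
    exact ⟨fun h => fwd' hk hxu hxv hu' hv' Hu Hv hs h,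
      fun h => fwd' hk hxu' hxv' hu hv (simonCongr_symm' Hu) (simonCongr_symm' Hv) hs h⟩

private lemma beta_single' {x : α} {u b v : List α}
    (h1 : IsArchOn Finset.univ (u ++ b))
    (h2 : IsArchOn Finset.univ ((b ++ v).reverse))
    (hxu : x ∉ u) (hxv : x ∉ v)
    (hu : ∀ y, y ≠ x → y ∈ u) (hv : ∀ y, y ≠ x → y ∈ v) : b = [x] := by
  have hxb : x ∈ b := by
    have hx := h1.1 x (Finset.mem_univ x)
    simp only [List.mem_append] at hx
    tauto
  have hbne : b ≠ [] := by rintro rfl; simp at hxb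
  obtain ⟨a', y, heq, -, hy⟩ := h1.2
  have h1' : (u ++ b.dropLast) ++ [b.getLast hbne] = a' ++ [y] := by
    rw [List.append_assoc, List.dropLast_append_getLast]; exact heq
  obtain ⟨ha, hy'⟩ := List.append_inj' h1' rfl
  simp only [List.cons.injEq] at hy'
  rw [← hy'.1, ← ha] at hy
  simp only [List.mem_append, not_or] at hy
  have hlastx : b.getLast hbne = x := by
    by_contra hne
    exact hy.1 (hu _ hne)
  obtain ⟨a'', z, heq2, -, hz⟩ := h2.2
  have h2' : (v.reverse ++ b.tail.reverse) ++ [b.head hbne] = a'' ++ [z] := by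
    rw [List.append_assoc, ← List.reverse_cons, List.cons_head_tail hbne, ← List.reverse_append]
    exact heq2
  obtain ⟨ha2, hz'⟩ := List.append_inj' h2' rfl
  simp only [List.cons.injEq] at hz'
  rw [← hz'.1, ← ha2] at hz
  simp only [List.mem_append, List.mem_reverse, not_or] at hz
  have hheadx : b.head hbne = x := by
    by_contra hne
    exact hz.1 (hv _ hne)
  cases b with
  | nil => exact absurd rfl hbne
  | cons hd tl =>
    simp only [List.head_cons] at hheadx
    subst hheadx
    cases tl with
    | nil => rfl
    | cons c t =>
      exfalso
      rw [List.dropLast_cons₂, hlastx] at hy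
      exact hy.2 List.mem_cons_self

/-- `1`-universal words whose four `α`-factors all have the same
alphabet of size `|Σ| − 1` are `k`-congruent iff corresponding `α`-factors are
`(k−1)`-congruent. -/
theorem simonCongr_alpha_same_coalphabet (k : ℕ) (hk : 1 ≤ k)
    (w w' : List α) (A B A' B' : ℕ → List α)
    (hw : IsAlphaBetaFact w 1 A B) (hw' : IsAlphaBetaFact w' 1 A' B')
    (hiw : iotaUniv w = 1) (hiw' : iotaUniv w' = 1)
    (h01 : (A 0).toFinset = (A 1).toFinset)
    (h01' : (A 1).toFinset = (A' 0).toFinset)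
    (h01'' : (A' 0).toFinset = (A' 1).toFinset)
    (hcard : (A 0).toFinset.card = Fintype.card α - 1) :
    SimonCongr k w w' ↔
      (SimonCongr (k - 1) (A 0) (A' 0) ∧ SimonCongr (k - 1) (A 1) (A' 1)) := by
  obtain ⟨⟨heqw, harchw, hrestw⟩, ⟨-, harchwR, -⟩⟩ := hw
  obtain ⟨⟨heqw', harchw', -⟩, ⟨-, harchwR', -⟩⟩ := hw'
  have harch1 : IsArchOn Finset.univ (A 0 ++ B 1) :=
    harchw _ (by rw [List.mem_ofFn]; exact ⟨0, rfl⟩)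
  have harch2 : IsArchOn Finset.univ ((B 1 ++ A 1).reverse) :=
    harchwR _ (by rw [List.mem_ofFn]; exact ⟨0, rfl⟩)
  have harch1' : IsArchOn Finset.univ (A' 0 ++ B' 1) :=
    harchw' _ (by rw [List.mem_ofFn]; exact ⟨0, rfl⟩)
  have harch2' : IsArchOn Finset.univ ((B' 1 ++ A' 1).reverse) :=
    harchwR' _ (by rw [List.mem_ofFn]; exact ⟨0, rfl⟩)
  haveI hne : Nonempty α := by
    by_contra hne
    exact hrestw fun y _ => absurd ⟨y⟩ hne
  have hc : (A 0).toFinsetᶜ.card = 1 := by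
    rw [Finset.card_compl, hcard]
    have h1 := Fintype.card_pos (α := α)
    have h2 := Finset.card_le_univ (A 0).toFinset
    omega
  obtain ⟨x, hxS⟩ := Finset.card_eq_one.mp hc
  have hmem : ∀ y : α, y ∉ (A 0).toFinset ↔ y = x := fun y => by
    rw [← Finset.mem_compl, hxS, Finset.mem_singleton]
  have hxnS : x ∉ (A 0).toFinset := (hmem x).mpr rfl
  have hSmem : ∀ y, y ≠ x → y ∈ (A 0).toFinset := fun y hy => by
    by_contra h; exact hy ((hmem y).mp h)
  have halpha : ∀ l : List α, l.toFinset = (A 0).toFinset →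
      x ∉ l ∧ ∀ y, y ≠ x → y ∈ l := by
    intro l hl
    constructor
    · intro h
      apply hxnS
      rw [← hl]
      exact List.mem_toFinset.mpr h
    · intro y hy
      have := hSmem y hy
      rw [← hl] at this
      exact List.mem_toFinset.mp this
  obtain ⟨hx0, hu0⟩ := halpha (A 0) rfl
  obtain ⟨hx1, hu1⟩ := halpha (A 1) h01.symm
  obtain ⟨hx0', hu0'⟩ := halpha (A' 0) (h01.trans h01').symm
  obtain ⟨hx1', hu1'⟩ := halpha (A' 1) ((h01.trans h01').trans h01'').symm
  have hB : B 1 = [x] := beta_single' harch1 harch2 hx0 hx1 hu0 hu1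
  have hB' : B' 1 = [x] := beta_single' harch1' harch2' hx0' hx1' hu0' hu1'
  have hweq : w = A 0 ++ ([x] ++ A 1) := by
    rw [heqw]
    simp [List.ofFn_succ, hB]
  have hweq' : w' = A' 0 ++ ([x] ++ A' 1) := by
    rw [heqw']
    simp [List.ofFn_succ, hB']
  rw [hweq, hweq']
  exact key' hk hx0 hx1 hx0' hx1' hu0 hu1 hu0' hu1'
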